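/- For all integers n ≥ k ≥ 0, the (q,r)-Whitney numbers of the second kind satisfy the horizontal recurrence relation W_{m,r}[n,k]_q = Σ_{j=0}^{n−k} (−1)^j q^{−r−m(k+j)} · (∏_{h=k+1}^{k+j} q^{−(r+mh−m)} [mh+r]_q) · W_{m,r}[n+1,k+j+1]_q, where the product over an empty index range equals 1. -/

import Mathlib

open Finset

/-- The `q`-integer `[s]_q = (q^s - 1)/(q - 1)` for an integer `s`. -/
noncomputable def qint (q : ℝ) (s : ℤ) : ℝ := (q ^ s - 1) / (q - 1)

/-- The `(q,r)`-Whitney numbers of the second kind `W_{m,r}[n,k]_q`, with `r : ℤ` so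
that both `W_{m,r}` and `W_{m,-r}` are covered: `W[0,0] = 1`, `W[n,k] = 0` for `k > n`,
and `W[n,k] = q^(m(k-1)+r) W[n-1,k-1] + [mk+r]_q W[n-1,k]`. -/
noncomputable def qWhitney2 (q : ℝ) (m : ℕ) (r : ℤ) : ℕ → ℕ → ℝ
  | 0, 0 => 1
  | 0, _ + 1 => 0
  | n + 1, 0 => qint q r * qWhitney2 q m r n 0
  | n + 1, k + 1 =>
      q ^ (m * k + r) * qWhitney2 q m r n k
        + qint q (m * (k + 1) + r) * qWhitney2 q m r n (k + 1)

lemma qW_zero (q : ℝ) (m : ℕ) (r : ℤ) : ∀ n k, n < k → qWhitney2 q m r n k = 0 := by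
  intro n
  induction n with
  | zero => intro k hk; match k, hk with | k+1, _ => rfl
  | succ n ih =>
    intro k hk
    match k, hk with
    | k+1, hk =>
      rw [qWhitney2, ih k (by omega), ih (k+1) (by omega)]
      ring

lemma aux_rec (q : ℝ) (hq : 0 < q) (m : ℕ) (r : ℤ) : ∀ d k,
    qWhitney2 q m r (k + d) k =
      ∑ j ∈ Finset.range (d + 1),
        (-1 : ℝ) ^ j * q ^ (-(r + m * (k + j))) *
          (∏ h ∈ Finset.Icc (k + 1) (k + j),
            q ^ (-(r + m * h - m)) * qint q ((m : ℤ) * h + r)) *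
          qWhitney2 q m r (k + d + 1) (k + j + 1) := by
  have hq0 : q ≠ 0 := ne_of_gt hq
  intro d
  induction d with
  | zero =>
    intro k
    rw [show (0:ℕ)+1 = 1 from rfl, Finset.sum_range_one]
    rw [show Finset.Icc (k+1) (k+0) = ∅ from Finset.Icc_eq_empty (by omega), Finset.prod_empty]
    rw [show k + 0 + 1 = k + 1 from rfl, show k + (0:ℕ) = k from rfl]
    rw [show qWhitney2 q m r (k+1) (k+1) =
        q ^ ((m:ℤ) * k + r) * qWhitney2 q m r k k
          + qint q ((m:ℤ) * (k + 1) + r) * qWhitney2 q m r k (k + 1) from by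
      rw [qWhitney2]]
    rw [qW_zero q m r k (k+1) (by omega)]
    have h1 : q ^ (-(r + (m:ℤ) * k)) * q ^ ((m:ℤ) * k + r) = 1 := by
      rw [← zpow_add₀ hq0]; ring_nf; exact zpow_zero q
    simp only [pow_zero, Nat.cast_zero, add_zero, one_mul, mul_one, mul_zero]
    rw [← mul_assoc, h1, one_mul]
  | succ d ih =>
    intro k
    rw [Finset.sum_range_succ']
    have key : ∀ j ∈ Finset.range (d + 1),
        (-1 : ℝ) ^ (j+1) * q ^ (-(r + (m:ℤ) * ((k:ℤ) + ((j+1 : ℕ) : ℤ)))) *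
          (∏ h ∈ Finset.Icc (k + 1) (k + (j+1)),
            q ^ (-(r + m * h - m)) * qint q ((m : ℤ) * h + r)) *
          qWhitney2 q m r (k + (d+1) + 1) (k + (j+1) + 1)
        = (-(q ^ (-(r + (m:ℤ) * k)) * qint q ((m:ℤ) * (k+1) + r))) *
          ((-1 : ℝ) ^ j * q ^ (-(r + (m:ℤ) * (((k+1 : ℕ) : ℤ) + (j:ℤ)))) *
          (∏ h ∈ Finset.Icc ((k+1) + 1) ((k+1) + j),
            q ^ (-(r + m * h - m)) * qint q ((m : ℤ) * h + r)) *
          qWhitney2 q m r ((k+1) + d + 1) ((k+1) + j + 1)) := by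
      intro j _
      have hins : Finset.Icc (k + 1) (k + (j+1)) =
          insert (k+1) (Finset.Icc ((k+1) + 1) ((k+1) + j)) := by
        ext x
        simp only [Finset.mem_Icc, Finset.mem_insert]
        omega
      rw [hins, Finset.prod_insert (by simp [Finset.mem_Icc])]
      rw [show k + (d+1) + 1 = (k+1) + d + 1 from by omega,
          show k + (j+1) + 1 = (k+1) + j + 1 from by omega]
      have e1 : q ^ (-(r + (m:ℤ) * ((k+1 : ℕ)) - (m:ℤ))) = q ^ (-(r + (m:ℤ) * k)) := by
        congr 1 <;> push_cast <;> ring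
      have e2 : q ^ (-(r + (m:ℤ) * ((k:ℤ) + ((j+1 : ℕ) : ℤ)))) =
          q ^ (-(r + (m:ℤ) * (((k+1 : ℕ) : ℤ) + (j:ℤ)))) := by
        congr 1 <;> push_cast <;> ring
      have e3 : qint q ((m:ℤ) * ((k+1 : ℕ)) + r) = qint q ((m:ℤ) * ((k:ℤ)+1) + r) := by
        congr 1 <;> push_cast <;> ring
      rw [e1, e2, e3]
      ring
    rw [Finset.sum_congr rfl key, ← Finset.mul_sum, ← ih (k+1)]
    rw [show Finset.Icc (k+1) (k+0) = ∅ from Finset.Icc_eq_empty (by omega), Finset.prod_empty]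
    rw [show (k+1) + d = k + (d+1) from by omega]
    rw [show qWhitney2 q m r (k + (d+1) + 1) (k + 0 + 1) =
        q ^ ((m:ℤ) * k + r) * qWhitney2 q m r (k + (d+1)) k
          + qint q ((m:ℤ) * (k + 1) + r) * qWhitney2 q m r (k + (d+1)) (k + 1) from by
      show qWhitney2 q m r ((k + (d+1)) + 1) (k + 1) = _
      rw [qWhitney2]]
    have h1 : q ^ (-(r + (m:ℤ) * k)) * q ^ ((m:ℤ) * k + r) = 1 := by
      rw [← zpow_add₀ hq0]; ring_nf; exact zpow_zero q
    simp only [pow_zero, Nat.cast_zero, add_zero, one_mul, mul_one]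
    rw [mul_add (q ^ (-(r + (m:ℤ) * k))), ← mul_assoc (q ^ (-(r + (m:ℤ) * k))), h1, one_mul]
    ring

theorem qWhitney2_horizontal_recurrence (q : ℝ) (hq : 0 < q) (hq1 : q ≠ 1) (m r : ℕ) (hm : 0 < m) (hr : 0 < r)
    (n k : ℕ) (hkn : k ≤ n) :
    qWhitney2 q m (r : ℤ) n k =
      ∑ j ∈ Finset.range (n - k + 1),
        (-1 : ℝ) ^ j * q ^ (-((r : ℤ) + m * (k + j))) *
          (∏ h ∈ Finset.Icc (k + 1) (k + j),
            q ^ (-((r : ℤ) + m * h - m)) * qint q ((m : ℤ) * h + r)) *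
          qWhitney2 q m (r : ℤ) (n + 1) (k + j + 1) := by
  obtain ⟨d, rfl⟩ := Nat.exists_eq_add_of_le hkn
  have : k + d - k = d := by omega
  rw [this]
  exact aux_rec q hq m (r : ℤ) d k
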